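/- Consider X = {a, b, c} with x ⊳ y = f(y) where f is the 3-cycle a ↦ b ↦ c ↦ a. Then (X, ⊳) is an RC-quasigroup of class 3, its structure group G has presentation ⟨a, b, c | ac = b², ba = c², cb = a²⟩, and the quotient W obtained by adding the relation abc = 1 has order 27. -/

import Mathlib

set_option maxHeartbeats 1000000

/-- `PiAux op l y` is `Π_{r+1}(x₁, ..., x_r, y)` where `l = [x_r, ..., x₁]`. -/
def PiAux {X : Type*} (op : X → X → X) : List X → X → X
  | [], y => y
  | a :: l, y => op (PiAux op l a) (PiAux op l y)

/-- `SigmaRev op l` is the list of letters of the word `Σ_r(x₁, ..., x_r)` for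
`l = [x_r, ..., x₁]` the reversed argument list. -/
def SigmaRev {X : Type*} (op : X → X → X) : List X → List X
  | [] => []
  | a :: l => SigmaRev op l ++ [PiAux op l a]

/-- The relators `x(x ⊳ y)(y(y ⊳ x))⁻¹` presenting the structure group of `(X, ⊳)`. -/
def structGroupRels {X : Type*} (op : X → X → X) : Set (FreeGroup X) :=
  { r | ∃ x y : X, r = FreeGroup.of x * FreeGroup.of (op x y)
      * (FreeGroup.of y * FreeGroup.of (op y x))⁻¹ }

def gmul (a b : Fin 27) : Fin 27 :=
  ⟨((a.val / 9 + b.val / 9) % 3) * 9 + (7 ^ (b.val / 9) * (a.val % 9) + b.val % 9) % 9, by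
    have h1 : (a.val / 9 + b.val / 9) % 3 < 3 := Nat.mod_lt _ (by norm_num)
    have h2 : (7 ^ (b.val / 9) * (a.val % 9) + b.val % 9) % 9 < 9 := Nat.mod_lt _ (by norm_num)
    omega⟩

def ginv (a : Fin 27) : Fin 27 :=
  ⟨((3 - a.val / 9) % 3) * 9 + (9 - (7 ^ ((3 - a.val / 9) % 3) * (a.val % 9)) % 9) % 9, by
    have h1 : (3 - a.val / 9) % 3 < 3 := Nat.mod_lt _ (by norm_num)
    have h2 : (9 - (7 ^ ((3 - a.val / 9) % 3) * (a.val % 9)) % 9) % 9 < 9 := Nat.mod_lt _ (by norm_num)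
    omega⟩

def G27 : Type := Fin 27

instance : DecidableEq G27 := instDecidableEqFin 27
instance : Fintype G27 := Fin.fintype 27

set_option maxHeartbeats 12000000 in
instance : Group G27 where
  mul := gmul
  one := (0 : Fin 27)
  inv := ginv
  mul_assoc := by decide
  one_mul := by decide
  mul_one := by decide
  inv_mul_cancel := by decide

def rels4 : Set (FreeGroup (Fin 3)) :=
  ({FreeGroup.of (0 : Fin 3) * FreeGroup.of (2 : Fin 3)
            * (FreeGroup.of (1 : Fin 3) * FreeGroup.of (1 : Fin 3))⁻¹,
          FreeGroup.of (1 : Fin 3) * FreeGroup.of (0 : Fin 3)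
            * (FreeGroup.of (2 : Fin 3) * FreeGroup.of (2 : Fin 3))⁻¹,
          FreeGroup.of (2 : Fin 3) * FreeGroup.of (1 : Fin 3)
            * (FreeGroup.of (0 : Fin 3) * FreeGroup.of (0 : Fin 3))⁻¹} : Set (FreeGroup (Fin 3)))
        ∪ {FreeGroup.of (0 : Fin 3) * FreeGroup.of (1 : Fin 3) * FreeGroup.of (2 : Fin 3)}

abbrev W := PresentedGroup rels4

def A : W := PresentedGroup.of 0
def B : W := PresentedGroup.of 1
def C : W := PresentedGroup.of 2

lemma rel_mem (r : FreeGroup (Fin 3)) (hr : r ∈ rels4) : (QuotientGroup.mk r : W) = 1 :=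
  (QuotientGroup.eq_one_iff r).mpr (Subgroup.subset_normalClosure hr)

lemma mk_of (x : Fin 3) : (QuotientGroup.mk (FreeGroup.of x) : W) = PresentedGroup.of x := rfl

lemma h1 : A * C = B * B := by
  have h := rel_mem _ (show _ ∈ rels4 by left; left; rfl)
  simp only [QuotientGroup.mk_mul, QuotientGroup.mk_inv, mk_of] at h
  exact mul_inv_eq_one.mp h

lemma h2 : B * A = C * C := by
  have h := rel_mem _ (show _ ∈ rels4 by left; right; left; rfl)
  simp only [QuotientGroup.mk_mul, QuotientGroup.mk_inv, mk_of] at h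
  exact mul_inv_eq_one.mp h

lemma h3 : C * B = A * A := by
  have h := rel_mem _ (show _ ∈ rels4 by left; right; right; rfl)
  simp only [QuotientGroup.mk_mul, QuotientGroup.mk_inv, mk_of] at h
  exact mul_inv_eq_one.mp h

lemma h4 : A * B * C = 1 := by
  have h := rel_mem _ (show _ ∈ rels4 by right; rfl)
  simp only [QuotientGroup.mk_mul, mk_of] at h
  exact h

lemma hc : C = B⁻¹ * A⁻¹ := by
  have h := h4
  rw [mul_assoc] at h
  have h' := inv_eq_of_mul_eq_one_right h
  rw [h']; group

lemma h3' : B⁻¹ * A⁻¹ * B = A * A := by rw [← hc]; exact h3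

lemma h1' : A * (B⁻¹ * A⁻¹) = B * B := by rw [← hc]; exact h1

-- A * B = B * (A*A)⁻¹
lemma hAB : A * B = B * (A * A)⁻¹ := by
  calc A * B = B * (B⁻¹ * A⁻¹ * B)⁻¹ * B⁻¹ * B := by group
  _ = B * (A * A)⁻¹ * B⁻¹ * B := by rw [h3']
  _ = B * (A * A)⁻¹ := by group

-- A * B = (B*B)⁻¹ * A
lemma hAB2 : A * B = (B * B)⁻¹ * A := by
  calc A * B = (A * (B⁻¹ * A⁻¹))⁻¹ * A := by group
  _ = (B * B)⁻¹ * A := by rw [h1']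

lemma hb3 : B * B * B = A * A * A := by
  have e : B * (A * A)⁻¹ = (B * B)⁻¹ * A := hAB.symm.trans hAB2
  calc B * B * B = B * B * (B * (A * A)⁻¹) * (A * A) := by group
  _ = B * B * ((B * B)⁻¹ * A) * (A * A) := by rw [e]
  _ = A * A * A := by group

lemma hconj : B⁻¹ * A * B = (A * A)⁻¹ := by
  calc B⁻¹ * A * B = B⁻¹ * (A * B) := by group
  _ = B⁻¹ * (B * (A * A)⁻¹) := by rw [hAB]
  _ = (A * A)⁻¹ := by group

lemma ha9 : A ^ 9 = 1 := by
  have e1 : B⁻¹ * (A * A * A) * B = (A*A)⁻¹ * (A*A)⁻¹ * (A*A)⁻¹ := by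
    calc B⁻¹ * (A * A * A) * B
        = (B⁻¹ * A * B) * (B⁻¹ * A * B) * (B⁻¹ * A * B) := by group
    _ = _ := by rw [hconj]
  have e2 : B⁻¹ * (A * A * A) * B = A * A * A := by
    rw [← hb3]; group
  have e := e2.symm.trans e1
  calc A ^ 9 = (A * A * A) * (A * A * A * A * A * A) := by rw [pow_succ, pow_succ, pow_succ, pow_succ, pow_succ, pow_succ, pow_succ, pow_succ, pow_one]; group
  _ = ((A*A)⁻¹ * (A*A)⁻¹ * (A*A)⁻¹) * (A * A * A * A * A * A) := by rw [e]
  _ = 1 := by group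

def T : W := B * A⁻¹

lemma hA'B : A⁻¹ * B = B * (A * A) := by
  calc A⁻¹ * B = B * (B⁻¹ * A⁻¹ * B) := by group
  _ = B * (A * A) := by rw [h3']

lemma ht3 : T ^ 3 = 1 := by
  calc T ^ 3 = B * (A⁻¹ * B) * A⁻¹ * B * A⁻¹ := by rw [T, pow_succ, pow_succ, pow_one]; group
  _ = B * (B * (A * A)) * A⁻¹ * B * A⁻¹ := by rw [hA'B]
  _ = B * B * (A * B) * A⁻¹ := by group
  _ = B * B * ((B * B)⁻¹ * A) * A⁻¹ := by rw [hAB2]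
  _ = 1 := by group

lemma hcomm : A * T = T * A ^ 7 := by
  calc A * T = (A * B) * A⁻¹ := by rw [T]; group
  _ = (B * (A * A)⁻¹) * A⁻¹ := by rw [hAB]
  _ = (B * A⁻¹ * A ^ 7) * (A ^ 9)⁻¹ := by group
  _ = (B * A⁻¹ * A ^ 7) * (1 : W)⁻¹ := by rw [ha9]
  _ = T * A ^ 7 := by rw [T]; group

-- exponent helpers
lemma comm_pow : ∀ n : ℕ, A ^ n * T = T * A ^ (7 * n) := by
  intro n
  induction n with
  | zero => simp
  | succ n ih =>
    calc A ^ (n+1) * T = A ^ n * (A * T) := by rw [pow_succ]; group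
    _ = A ^ n * (T * A ^ 7) := by rw [hcomm]
    _ = (A ^ n * T) * A ^ 7 := by group
    _ = T * A ^ (7*n) * A ^ 7 := by rw [ih]
    _ = T * A ^ (7*(n+1)) := by rw [mul_assoc, ← pow_add]; ring_nf

lemma pow_comm_pow : ∀ (j i : ℕ), A ^ i * T ^ j = T ^ j * A ^ (7 ^ j * i) := by
  intro j
  induction j with
  | zero => simp
  | succ j ih =>
    intro i
    calc A ^ i * T ^ (j+1) = (A ^ i * T ^ j) * T := by rw [pow_succ]; group
    _ = T ^ j * A ^ (7 ^ j * i) * T := by rw [ih]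
    _ = T ^ j * (A ^ (7 ^ j * i) * T) := by group
    _ = T ^ j * (T * A ^ (7 * (7 ^ j * i))) := by rw [comm_pow]
    _ = T ^ (j+1) * A ^ (7 ^ (j+1) * i) := by rw [pow_succ]; ring_nf; group

lemma powA_mod (n : ℕ) : A ^ n = A ^ (n % 9) := by
  conv_lhs => rw [← Nat.div_add_mod n 9]
  rw [pow_add, pow_mul, ha9, one_pow, one_mul]

lemma powT_mod (n : ℕ) : T ^ n = T ^ (n % 3) := by
  conv_lhs => rw [← Nat.div_add_mod n 3]
  rw [pow_add, pow_mul, ht3, one_pow, one_mul]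

def jval (m : G27) : ℕ := (show Fin 27 from m).val / 9
def ival (m : G27) : ℕ := (show Fin 27 from m).val % 9

def rep (m : G27) : W := T ^ jval m * A ^ ival m

lemma coord_mul : ∀ m m' : G27, jval (m * m') = (jval m + jval m') % 3
    ∧ ival (m * m') = (7 ^ jval m' * ival m + ival m') % 9 := by decide

lemma repMul (m m' : G27) : rep m * rep m' = rep (m * m') := by
  have h := coord_mul m m'
  calc rep m * rep m'
      = T ^ jval m * (A ^ ival m * T ^ jval m') * A ^ ival m' := by rw [rep, rep]; group
  _ = T ^ jval m * (T ^ jval m' * A ^ (7 ^ jval m' * ival m)) * A ^ ival m' := by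
        rw [pow_comm_pow]
  _ = T ^ (jval m + jval m') * A ^ (7 ^ jval m' * ival m + ival m') := by
        rw [pow_add, pow_add]; group
  _ = T ^ ((jval m + jval m') % 3) * A ^ ((7 ^ jval m' * ival m + ival m') % 9) := by
        rw [← powA_mod, ← powT_mod]
  _ = rep (m * m') := by rw [rep, h.1, h.2]

lemma rep_one : rep 1 = 1 := by
  have hj : jval 1 = 0 := by decide
  have hi : ival 1 = 0 := by decide
  rw [rep, hj, hi, pow_zero, pow_zero, one_mul]

lemma repInv (m : G27) : (rep m)⁻¹ = rep m⁻¹ := by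
  apply inv_eq_of_mul_eq_one_right
  rw [repMul, mul_inv_cancel, rep_one]

def mA : G27 := show Fin 27 from 1
def mB : G27 := show Fin 27 from 10
def mC : G27 := show Fin 27 from 22

lemma repA : rep mA = A := by
  have hj : jval mA = 0 := by decide
  have hi : ival mA = 1 := by decide
  rw [rep, hj, hi, pow_zero, pow_one, one_mul]

lemma repB : rep mB = B := by
  have hj : jval mB = 1 := by decide
  have hi : ival mB = 1 := by decide
  rw [rep, hj, hi, pow_one, pow_one, T]; group

lemma hcInv : C⁻¹ = A * B := by rw [hc]; group

lemma repC : rep mC = C := by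
  have hj : jval mC = 2 := by decide
  have hi : ival mC = 4 := by decide
  rw [rep, hj, hi]
  have e1 : T ^ (2:ℕ) * A ^ (4:ℕ) = B * (A⁻¹ * B) * (A*A*A) := by
    rw [T, pow_succ, pow_one, pow_succ, pow_succ, pow_succ, pow_one]; group
  rw [e1, hA'B]
  calc B * (B * (A * A)) * (A * A * A)
      = C * (C⁻¹ * (B * (B * (A * A)) * (A * A * A))) := by group
  _ = C * ((A * B) * (B * (B * (A * A)) * (A * A * A))) := by rw [hcInv]
  _ = C * (A * (B * B * B) * (A * A * A * A * A)) := by simp only [mul_assoc]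
  _ = C * (A * (A * A * A) * (A * A * A * A * A)) := by rw [hb3]
  _ = C * (A ^ 9) := by rw [pow_succ, pow_succ, pow_succ, pow_succ, pow_succ, pow_succ, pow_succ, pow_succ, pow_one]; simp only [mul_assoc]
  _ = C := by rw [ha9, mul_one]

lemma main : ∀ g : FreeGroup (Fin 3), ∃ m : G27, (QuotientGroup.mk g : W) = rep m := by
  intro g
  induction g using FreeGroup.induction_on with
  | C1 => exact ⟨1, by rw [rep_one]; rfl⟩
  | of x =>
    fin_cases x
    · exact ⟨mA, by rw [repA]; rfl⟩
    · exact ⟨mB, by rw [repB]; rfl⟩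
    · exact ⟨mC, by rw [repC]; rfl⟩
  | inv_of x ih =>
    obtain ⟨m, hm⟩ := ih
    exact ⟨m⁻¹, by rw [← repInv, ← hm, QuotientGroup.mk_inv]; rfl⟩
  | mul x y ihx ihy =>
    obtain ⟨m, hm⟩ := ihx
    obtain ⟨m', hm'⟩ := ihy
    exact ⟨m * m', by rw [← repMul, ← hm, ← hm', QuotientGroup.mk_mul]; rfl⟩

def ff : Fin 3 → G27
  | 0 => mA
  | 1 => mB
  | 2 => mC

lemma hff : ∀ r ∈ rels4, FreeGroup.lift ff r = 1 := by
  intro r hr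
  rcases hr with (rfl | rfl | rfl) | rfl <;>
    · simp only [map_mul, map_inv, FreeGroup.lift_apply_of]
      decide

def φ : W →* G27 := PresentedGroup.toGroup hff

lemma φA : φ A = mA := PresentedGroup.toGroup.of hff
lemma φB : φ B = mB := PresentedGroup.toGroup.of hff
lemma φC : φ C = mC := PresentedGroup.toGroup.of hff

lemma hsec : ∀ m : G27, φ (rep m) = m := by
  intro m
  rw [rep, map_mul, map_pow, map_pow]
  rw [show φ T = mB * mA⁻¹ by rw [T, map_mul, map_inv, φA, φB], φA]
  revert m
  decide

lemma surjRep : Function.Surjective rep := by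
  intro w
  induction w using QuotientGroup.induction_on with
  | H g =>
    obtain ⟨m, hm⟩ := main g
    exact ⟨m, hm.symm⟩

lemma cardW : Nat.card W = 27 := by
  have hfin : Finite W := Finite.of_surjective rep surjRep
  have hG : Nat.card G27 = 27 := by rw [Nat.card_eq_fintype_card]; rfl
  have h1 : Nat.card W ≤ 27 := hG ▸ Nat.card_le_card_of_surjective rep surjRep
  have hφ : Function.Surjective φ := fun m => ⟨rep m, hsec m⟩
  have h2 : 27 ≤ Nat.card W := hG ▸ Nat.card_le_card_of_surjective φ hφ
  omega

def rels3 : Set (FreeGroup (Fin 3)) :=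
  {FreeGroup.of (0 : Fin 3) * FreeGroup.of (2 : Fin 3)
            * (FreeGroup.of (1 : Fin 3) * FreeGroup.of (1 : Fin 3))⁻¹,
          FreeGroup.of (1 : Fin 3) * FreeGroup.of (0 : Fin 3)
            * (FreeGroup.of (2 : Fin 3) * FreeGroup.of (2 : Fin 3))⁻¹,
          FreeGroup.of (2 : Fin 3) * FreeGroup.of (1 : Fin 3)
            * (FreeGroup.of (0 : Fin 3) * FreeGroup.of (0 : Fin 3))⁻¹}

open FreeGroup in
lemma closure_eq :
    Subgroup.normalClosure (structGroupRels (fun (_ : Fin 3) (y : Fin 3) => y + 1))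
      = Subgroup.normalClosure rels3 := by
  have g1 : (of (0:Fin 3) * of (2:Fin 3) * (of (1:Fin 3) * of (1:Fin 3))⁻¹ : FreeGroup (Fin 3))
      ∈ Subgroup.normalClosure rels3 := Subgroup.subset_normalClosure (by left; rfl)
  have g2 : (of (1:Fin 3) * of (0:Fin 3) * (of (2:Fin 3) * of (2:Fin 3))⁻¹ : FreeGroup (Fin 3))
      ∈ Subgroup.normalClosure rels3 := Subgroup.subset_normalClosure (by right; left; rfl)
  have g3 : (of (2:Fin 3) * of (1:Fin 3) * (of (0:Fin 3) * of (0:Fin 3))⁻¹ : FreeGroup (Fin 3))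
      ∈ Subgroup.normalClosure rels3 := Subgroup.subset_normalClosure (by right; right; rfl)
  apply le_antisymm
  · apply Subgroup.normalClosure_le_normal
    rintro r ⟨x, y, rfl⟩
    fin_cases x <;> fin_cases y
    · show (of (0:Fin 3) * of (1:Fin 3)) * (of (0:Fin 3) * of (1:Fin 3))⁻¹
        ∈ Subgroup.normalClosure rels3
      rw [mul_inv_cancel]; exact Subgroup.one_mem _
    · show (of (0:Fin 3) * of (2:Fin 3) * (of (1:Fin 3) * of (1:Fin 3))⁻¹ : FreeGroup (Fin 3))
        ∈ Subgroup.normalClosure rels3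
      exact g1
    · show (of (0:Fin 3) * of (0:Fin 3) * (of (2:Fin 3) * of (1:Fin 3))⁻¹ : FreeGroup (Fin 3))
        ∈ Subgroup.normalClosure rels3
      rw [show (of (0:Fin 3) * of (0:Fin 3) * (of (2:Fin 3) * of (1:Fin 3))⁻¹ : FreeGroup (Fin 3))
          = (of (2:Fin 3) * of (1:Fin 3) * (of (0:Fin 3) * of (0:Fin 3))⁻¹)⁻¹ by
        simp [mul_inv_rev, mul_assoc]]
      exact Subgroup.inv_mem _ g3
    · show (of (1:Fin 3) * of (1:Fin 3) * (of (0:Fin 3) * of (2:Fin 3))⁻¹ : FreeGroup (Fin 3))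
        ∈ Subgroup.normalClosure rels3
      rw [show (of (1:Fin 3) * of (1:Fin 3) * (of (0:Fin 3) * of (2:Fin 3))⁻¹ : FreeGroup (Fin 3))
          = (of (0:Fin 3) * of (2:Fin 3) * (of (1:Fin 3) * of (1:Fin 3))⁻¹)⁻¹ by
        simp [mul_inv_rev, mul_assoc]]
      exact Subgroup.inv_mem _ g1
    · show (of (1:Fin 3) * of (2:Fin 3)) * (of (1:Fin 3) * of (2:Fin 3))⁻¹
        ∈ Subgroup.normalClosure rels3
      rw [mul_inv_cancel]; exact Subgroup.one_mem _
    · show (of (1:Fin 3) * of (0:Fin 3) * (of (2:Fin 3) * of (2:Fin 3))⁻¹ : FreeGroup (Fin 3))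
        ∈ Subgroup.normalClosure rels3
      exact g2
    · show (of (2:Fin 3) * of (1:Fin 3) * (of (0:Fin 3) * of (0:Fin 3))⁻¹ : FreeGroup (Fin 3))
        ∈ Subgroup.normalClosure rels3
      exact g3
    · show (of (2:Fin 3) * of (2:Fin 3) * (of (1:Fin 3) * of (0:Fin 3))⁻¹ : FreeGroup (Fin 3))
        ∈ Subgroup.normalClosure rels3
      rw [show (of (2:Fin 3) * of (2:Fin 3) * (of (1:Fin 3) * of (0:Fin 3))⁻¹ : FreeGroup (Fin 3))
          = (of (1:Fin 3) * of (0:Fin 3) * (of (2:Fin 3) * of (2:Fin 3))⁻¹)⁻¹ by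
        simp [mul_inv_rev, mul_assoc]]
      exact Subgroup.inv_mem _ g2
    · show (of (2:Fin 3) * of (0:Fin 3)) * (of (2:Fin 3) * of (0:Fin 3))⁻¹
        ∈ Subgroup.normalClosure rels3
      rw [mul_inv_cancel]; exact Subgroup.one_mem _
  · apply Subgroup.normalClosure_le_normal
    rintro r (rfl | rfl | rfl)
    · exact Subgroup.subset_normalClosure ⟨0, 1, rfl⟩
    · exact Subgroup.subset_normalClosure ⟨1, 2, rfl⟩
    · exact Subgroup.subset_normalClosure ⟨2, 0, rfl⟩

def theIso : PresentedGroup (structGroupRels (fun (_ : Fin 3) (y : Fin 3) => y + 1))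
    ≃* PresentedGroup rels3 :=
  QuotientGroup.quotientMulEquivOfEq closure_eq


/-- for `X = {a, b, c}` (encoded as `Fin 3` with `a = 0`, `b = 1`, `c = 2`)
and `x ⊳ y = f(y)` with `f` the cycle `a ↦ b ↦ c ↦ a`, the pair `(X, ⊳)` is an
RC-quasigroup of class 3, its structure group `G` is isomorphic to the group presented by
`⟨a, b, c ∣ ac = b², ba = c², cb = a²⟩`, and the quotient obtained by adding the relation
`abc = 1` has order `27`. -/
theorem stmt18 :
    (∀ x y z : Fin 3, (fun (_ : Fin 3) (y : Fin 3) => y + 1) ((fun _ y => y + 1) x y)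
        ((fun (_ : Fin 3) (y : Fin 3) => y + 1) x z)
      = (fun (_ : Fin 3) (y : Fin 3) => y + 1) ((fun _ y => y + 1) y x)
        ((fun (_ : Fin 3) (y : Fin 3) => y + 1) y z)) ∧
    (∀ x : Fin 3, Function.Bijective ((fun (_ : Fin 3) (y : Fin 3) => y + 1) x)) ∧
    (∀ x y : Fin 3,
      PiAux (fun (_ : Fin 3) (y : Fin 3) => y + 1) (List.replicate 3 x) y = y) ∧
    Nonempty (PresentedGroup (structGroupRels (fun (_ : Fin 3) (y : Fin 3) => y + 1))
      ≃* PresentedGroup ({FreeGroup.of (0 : Fin 3) * FreeGroup.of (2 : Fin 3)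
            * (FreeGroup.of (1 : Fin 3) * FreeGroup.of (1 : Fin 3))⁻¹,
          FreeGroup.of (1 : Fin 3) * FreeGroup.of (0 : Fin 3)
            * (FreeGroup.of (2 : Fin 3) * FreeGroup.of (2 : Fin 3))⁻¹,
          FreeGroup.of (2 : Fin 3) * FreeGroup.of (1 : Fin 3)
            * (FreeGroup.of (0 : Fin 3) * FreeGroup.of (0 : Fin 3))⁻¹} : Set (FreeGroup (Fin 3)))) ∧
    Nat.card (PresentedGroup (({FreeGroup.of (0 : Fin 3) * FreeGroup.of (2 : Fin 3)
            * (FreeGroup.of (1 : Fin 3) * FreeGroup.of (1 : Fin 3))⁻¹,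
          FreeGroup.of (1 : Fin 3) * FreeGroup.of (0 : Fin 3)
            * (FreeGroup.of (2 : Fin 3) * FreeGroup.of (2 : Fin 3))⁻¹,
          FreeGroup.of (2 : Fin 3) * FreeGroup.of (1 : Fin 3)
            * (FreeGroup.of (0 : Fin 3) * FreeGroup.of (0 : Fin 3))⁻¹} : Set (FreeGroup (Fin 3)))
        ∪ {FreeGroup.of (0 : Fin 3) * FreeGroup.of (1 : Fin 3) * FreeGroup.of (2 : Fin 3)}))
      = 27 := by
  exact ⟨by decide, by decide, by decide, ⟨theIso⟩, cardW⟩
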